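/- Let (C, ▷, †) be a guarded Conway category. Define Tr^X_{A,B}(f) = π_r ∘ f ∘ (p_X × id_A) ∘ ⟨(π_ℓ ∘ f)†, id_A⟩ for f : ▷X × A → X × B. Then Tr satisfies the yanking axiom: Tr^X_{X,▷X}(c) = p_X, where c : ▷X × X → X × ▷X is the symmetry isomorphism. -/

import Mathlib

open CategoryTheory CategoryTheory.Limits

/-- The trace induced by a guarded dagger:
`Tr^X_{A,B}(f) = π_r ∘ f ∘ (p_X × id_A) ∘ ⟨(π_ℓ ∘ f)†, id_A⟩`. -/
noncomputable def TrD {C : Type*} [Category C] [HasFiniteProducts C]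
    (F : C ⥤ C) (p : 𝟭 C ⟶ F)
    (dag : ∀ {X Y : C}, (F.obj X ⨯ Y ⟶ X) → (Y ⟶ X))
    {X A B : C} (f : F.obj X ⨯ A ⟶ X ⨯ B) : A ⟶ B :=
  prod.lift (dag (f ≫ prod.fst)) (𝟙 A) ≫ prod.map (p.app X) (𝟙 A) ≫ f ≫ prod.snd
/-- In a guarded Conway category `(C, ▷, †)`, the induced trace `Tr_†` satisfies yanking. -/
theorem stmt12 {C : Type*} [Category C] [HasFiniteProducts C]
    (F : C ⥤ C) (p : 𝟭 C ⟶ F)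
    (dag : ∀ {X Y : C}, (F.obj X ⨯ Y ⟶ X) → (Y ⟶ X))
    (hfix : ∀ {X Y : C} (f : F.obj X ⨯ Y ⟶ X),
      dag f = prod.lift (dag f) (𝟙 Y) ≫ prod.map (p.app X) (𝟙 Y) ≫ f)
    (hparam : ∀ {X Y Z : C} (f : F.obj X ⨯ Y ⟶ X) (h : Z ⟶ Y),
      h ≫ dag f = dag (prod.map (𝟙 (F.obj X)) h ≫ f))
    (hcomp : ∀ {X Y Z : C} (f : F.obj X ⨯ Y ⟶ Z) (g : Z ⟶ X),
      dag (f ≫ g) = dag (prod.map (F.map g) (𝟙 Y) ≫ f) ≫ g)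
    (hdd : ∀ {X Y : C} (f : F.obj X ⨯ (F.obj X ⨯ Y) ⟶ X),
      dag (dag f) =
        dag (prod.lift (prod.fst : F.obj X ⨯ Y ⟶ F.obj X) (𝟙 (F.obj X ⨯ Y)) ≫ f)) :
    ∀ X : C,
      TrD F p @dag (prod.lift (prod.snd : F.obj X ⨯ X ⟶ X) prod.fst) = p.app X := by
  intro X
  have h1 : dag (prod.snd : F.obj X ⨯ X ⟶ X) = 𝟙 X := by
    have := hfix (prod.snd : F.obj X ⨯ X ⟶ X)
    simpa using this.trans (by erw [prod.map_snd, Category.comp_id, prod.lift_snd])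
  simp [TrD, h1]
  erw [prod.lift_snd, prod.lift_fst, prod.lift_fst, h1, Category.id_comp]
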